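/- Width irrevocability of history rejection: if reject(H, b, m) then reject(H ∪ H', b, m) for any additional finite set of traces H'. -/
import Mathlib


/-- Monitors: `no` (rejection), `yes` (inconclusive ✓), action prefix,
recursion (de Bruijn), variables, and parallel composition where
`par true` is conjunction `⊗` and `par false` is disjunction `⊕`. -/
inductive Mon (Act : Type) : Type
  | no : Mon Act
  | yes : Mon Act
  | act : Act → Mon Act → Mon Act
  | mrec : Mon Act → Mon Act
  | var : Nat → Mon Act
  | par : Bool → Mon Act → Mon Act → Mon Act

/-- Substitute monitor `s` for variable `k` in a monitor. -/
def Mon.substV {Act : Type} : Mon Act → Nat → Mon Act → Mon Act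
  | .no, _, _ => .no
  | .yes, _, _ => .yes
  | .act a m, k, s => .act a (m.substV k s)
  | .mrec m, k, s => .mrec (m.substV (k + 1) s)
  | .var n, k, s => if n = k then s else .var n
  | .par o m n, k, s => .par o (m.substV k s) (n.substV k s)

/-- A monitor can perform a τ move (independent of the trace and history). -/
def canTau {Act : Type} : Mon Act → Prop
  | .mrec _ => True
  | .par _ m n => m = .no ∨ n = .no ∨ canTau m ∨ canTau n
  | _ => False

/-- A monitor can analyse the external action `a`. -/
def canAct {Act : Type} (a : Act) : Mon Act → Prop
  | .yes => True
  | .act b _ => b = a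
  | .par _ m n =>
      (canAct a m ∧ canAct a n) ∨
      (n ≠ .no ∧ canAct a m ∧ ¬ canAct a n ∧ ¬ canTau n) ∨
      (m ≠ .no ∧ canAct a n ∧ ¬ canAct a m ∧ ¬ canTau m)
  | _ => False

/-- Executing-monitor transitions `(t, m) →μ_H (t', m')` relative to a
history `H`; label `none` is τ, label `some a` an external action. -/
inductive MStep {Act : Type} (H : Set (List Act)) :
    List Act × Mon Act → Option Act → List Act × Mon Act → Prop
  | mEnd : ∀ (t : List Act) (a : Act), MStep H (t, .yes) (some a) (t ++ [a], .yes)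
  | mAct : ∀ (t : List Act) (a : Act) (m : Mon Act),
      MStep H (t, .act a m) (some a) (t ++ [a], m)
  | mRec : ∀ (t : List Act) (m : Mon Act),
      MStep H (t, .mrec m) none (t, m.substV 0 (.mrec m))
  | mVrP1L : ∀ (t : List Act) (o : Bool) (m : Mon Act), t ∈ H →
      MStep H (t, .par o .no m) none (t, m)
  | mVrP1R : ∀ (t : List Act) (o : Bool) (m : Mon Act), t ∈ H →
      MStep H (t, .par o m .no) none (t, m)
  | mVrP2L : ∀ (t : List Act) (o : Bool) (m : Mon Act), t ∉ H →
      MStep H (t, .par o .no m) none (t, .no)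
  | mVrP2R : ∀ (t : List Act) (o : Bool) (m : Mon Act), t ∉ H →
      MStep H (t, .par o m .no) none (t, .no)
  | mTauL : ∀ {t : List Act} {m m' : Mon Act} (o : Bool) (n : Mon Act),
      MStep H (t, m) none (t, m') →
      MStep H (t, .par o m n) none (t, .par o m' n)
  | mTauR : ∀ {t : List Act} {n n' : Mon Act} (o : Bool) (m : Mon Act),
      MStep H (t, n) none (t, n') →
      MStep H (t, .par o m n) none (t, .par o m n')
  | mPar1 : ∀ {t t' : List Act} {a : Act} {m m' n n' : Mon Act} (o : Bool),
      MStep H (t, m) (some a) (t', m') → MStep H (t, n) (some a) (t', n') →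
      MStep H (t, .par o m n) (some a) (t', .par o m' n')
  | mPar2L : ∀ {t t' : List Act} {a : Act} {m m' : Mon Act} (o : Bool) (n : Mon Act),
      n ≠ .no → MStep H (t, m) (some a) (t', m') →
      ¬ canAct a n → ¬ canTau n →
      MStep H (t, .par o m n) (some a) (t', m')
  | mPar2R : ∀ {t t' : List Act} {a : Act} {n n' : Mon Act} (o : Bool) (m : Mon Act),
      m ≠ .no → MStep H (t, n) (some a) (t', n') →
      ¬ canAct a m → ¬ canTau m →
      MStep H (t, .par o m n) (some a) (t', n')

/-- `aft H a`: the continuations of the traces in `H` that start with `a`. -/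
def aft {Act : Type} (H : Set (List Act)) (a : Act) : Set (List Act) :=
  { t | a :: t ∈ H }

/-- The history rejection judgement `reject(H, b, m)` with determinacy
predicate `Det` and externality predicate `Ext` on actions. -/
inductive Reject {Act : Type} (Det : Act → Bool) (Ext : Act → Prop) :
    Set (List Act) → Bool → Mon Act → Prop
  | no : ∀ {H : Set (List Act)} {b : Bool}, H ≠ ∅ → Reject Det Ext H b .no
  | act : ∀ {H : Set (List Act)} {b : Bool} {a : Act} {m : Mon Act},
      Reject Det Ext (aft H a) (b && Det a) m → Reject Det Ext H b (.act a m)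
  | actI : ∀ {H : Set (List Act)} {b : Bool} {a i : Act} {m : Mon Act},
      ¬ Ext i → Reject Det Ext (aft H i) (b && Det i) (.act a m) →
      Reject Det Ext H b (.act a m)
  | parAL : ∀ {H : Set (List Act)} {b : Bool} {m n : Mon Act},
      Reject Det Ext H b m → Reject Det Ext H b (.par true m n)
  | parAR : ∀ {H : Set (List Act)} {b : Bool} {m n : Mon Act},
      Reject Det Ext H b n → Reject Det Ext H b (.par true m n)
  | parO : ∀ {H : Set (List Act)} {m n : Mon Act},
      Reject Det Ext H true m → Reject Det Ext H true n →
      Reject Det Ext H true (.par false m n)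
  | recur : ∀ {H : Set (List Act)} {b : Bool} {m : Mon Act},
      Reject Det Ext H b (m.substV 0 (.mrec m)) → Reject Det Ext H b (.mrec m)

theorem aft_union {Act : Type} (H H' : Set (List Act)) (a : Act) :
    aft (H ∪ H') a = aft H a ∪ aft H' a := rfl

theorem reject_mono {Act : Type} (Det : Act → Bool) (Ext : Act → Prop)
    {H : Set (List Act)} {b : Bool} {m : Mon Act}
    (h : Reject Det Ext H b m) (H' : Set (List Act)) :
    Reject Det Ext (H ∪ H') b m := by
  induction h generalizing H' with
  | no hne =>
      refine Reject.no ?_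
      intro he
      exact hne (Set.eq_empty_of_subset_empty (he ▸ Set.subset_union_left))
  | act _ ih => exact Reject.act (aft_union _ _ _ ▸ ih _)
  | actI hi _ ih => exact Reject.actI hi (aft_union _ _ _ ▸ ih _)
  | parAL _ ih => exact Reject.parAL (ih _)
  | parAR _ ih => exact Reject.parAR (ih _)
  | parO _ _ ih1 ih2 => exact Reject.parO (ih1 _) (ih2 _)
  | recur _ ih => exact Reject.recur (ih _)

/-- Width irrevocability of history rejection: rejection of a history is
preserved when any additional finite set of traces is added. -/
theorem reject_width_irrevocable {Act : Type} (Det : Act → Bool)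
    (Ext : Act → Prop) (H H' : Set (List Act)) (b : Bool)
    (m : Mon Act) (hfin : H'.Finite) (h : Reject Det Ext H b m) :
    Reject Det Ext (H ∪ H') b m := by
  exact reject_mono Det Ext h H'
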